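/- Sunrise lemma (right version): Let f ≥ 0 be integrable on ℝ, and for λ > 0 let D_λ = {x : M_R f(x) > λ} where M_R f(x) = sup_{b > x} (1/(b-x)) ∫_x^b f(t) dt. Then λ · |D_λ| = ∫_{D_λ} f(t) dt. -/

import Mathlib

open MeasureTheory Set
open scoped ENNReal

/-- The right-sided uncentered maximal function. -/
noncomputable def MR (f : ℝ → ℝ) (x : ℝ) : ℝ≥0∞ :=
  ⨆ (b : ℝ) (_ : x < b), ENNReal.ofReal ((b - x)⁻¹ * ∫ t in x..b, f t)

open Filter
open scoped Topology

namespace SunriseAux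

variable (f : ℝ → ℝ) (lam : ℝ)

noncomputable def F (x : ℝ) : ℝ := (∫ t in (0:ℝ)..x, f t) - lam * x

def D : Set ℝ := {x | ∃ b, x < b ∧ F f lam x < F f lam b}

variable {f lam}

theorem contF (hint : Integrable f) : Continuous (F f lam) := by
  exact (intervalIntegral.continuous_primitive (fun a b => hint.intervalIntegrable) 0).sub
    (continuous_const.mul continuous_id)

theorem F_atTop (hint : Integrable f) (hlam : 0 < lam) :
    Tendsto (F f lam) atTop atBot := by
  have h1 : Tendsto (fun x : ℝ => ∫ t in (0:ℝ)..x, f t) atTop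
      (𝓝 (∫ t in Ioi (0:ℝ), f t)) :=
    intervalIntegral_tendsto_integral_Ioi 0 hint.integrableOn tendsto_id
  have h2 : Tendsto (fun x : ℝ => -(lam * x)) atTop atBot := by
    exact tendsto_neg_atTop_atBot.comp (tendsto_id.const_mul_atTop hlam)
  exact (h1.add_atBot h2).congr (fun x => by simp only [F, sub_eq_add_neg])

theorem F_atBot (hint : Integrable f) (hlam : 0 < lam) :
    Tendsto (F f lam) atBot atTop := by
  have h1 : Tendsto (fun x : ℝ => ∫ t in x..(0:ℝ), f t) atBot
      (𝓝 (∫ t in Iic (0:ℝ), f t)) :=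
    intervalIntegral_tendsto_integral_Iic 0 hint.integrableOn tendsto_id
  have h1' : Tendsto (fun x : ℝ => ∫ t in (0:ℝ)..x, f t) atBot
      (𝓝 (-∫ t in Iic (0:ℝ), f t)) := by
    have := h1.neg
    refine this.congr (fun x => ?_)
    rw [intervalIntegral.integral_symm, neg_neg]
  have h2 : Tendsto (fun x : ℝ => -(lam * x)) atBot atTop := by
    have : Tendsto (fun x : ℝ => lam * x) atBot atBot :=
      tendsto_id.const_mul_atBot hlam
    exact tendsto_neg_atBot_atTop.comp this
  exact (h1'.add_atTop h2).congr (fun x => by simp only [F, sub_eq_add_neg])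


theorem exists_max (hint : Integrable f) (hlam : 0 < lam) (x : ℝ) :
    ∃ m, x ≤ m ∧ ∀ y, x ≤ y → F f lam y ≤ F f lam m := by
  obtain ⟨c, hc⟩ : ∃ c, ∀ y, c ≤ y → F f lam y ≤ F f lam x := by
    have := (F_atTop hint hlam).eventually (eventually_le_atBot (F f lam x))
    exact eventually_atTop.1 this
  obtain ⟨m, hm, hmax⟩ := (isCompact_Icc (a := x) (b := max x c)).exists_isMaxOn
    (nonempty_Icc.2 (le_max_left _ _)) ((contF hint).continuousOn)
  refine ⟨m, hm.1, fun y hy => ?_⟩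
  rcases le_total y (max x c) with h | h
  · exact hmax ⟨hy, h⟩
  · exact le_trans (hc y ((le_max_right x c).trans h)) (hmax ⟨le_rfl, le_max_left _ _⟩)

theorem exists_notMem_ge (hint : Integrable f) (hlam : 0 < lam) (x : ℝ) :
    ∃ m, x ≤ m ∧ m ∉ D f lam := by
  obtain ⟨m, hxm, hmax⟩ := exists_max hint hlam x
  exact ⟨m, hxm, fun ⟨b, hb, hFb⟩ => absurd (hmax b (hxm.trans hb.le)) (not_le.2 hFb)⟩

theorem exists_notMem_lt (hint : Integrable f) (hlam : 0 < lam) (x : ℝ) :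
    ∃ m, m < x ∧ m ∉ D f lam := by
  obtain ⟨m, hxm, hmax⟩ := exists_max hint hlam x
  obtain ⟨x1, hx1, hFx1⟩ : ∃ x1, x1 < x ∧ F f lam m < F f lam x1 := by
    have := (F_atBot hint hlam).eventually (eventually_gt_atTop (F f lam m))
    obtain ⟨c, hc⟩ := eventually_atBot.1 this
    exact ⟨min c (x - 1), lt_of_le_of_lt (min_le_right _ _) (by linarith),
      hc _ (min_le_left _ _)⟩
  obtain ⟨m', hxm', hmax'⟩ := exists_max hint hlam x1
  have hm'x : m' < x := by
    by_contra h
    push_neg at h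
    have h1 : F f lam m' ≤ F f lam m := hmax m' h
    have h2 : F f lam x1 ≤ F f lam m' := hmax' x1 le_rfl
    linarith
  exact ⟨m', hm'x, fun ⟨b, hb, hFb⟩ =>
    absurd (hmax' b (hxm'.trans hb.le)) (not_le.2 hFb)⟩


theorem isOpen_D (hint : Integrable f) : IsOpen (D f lam) := by
  have : D f lam = ⋃ b : ℝ, (Iio b ∩ F f lam ⁻¹' Iio (F f lam b)) := by
    ext x; simp [D, mem_iUnion, and_comm]
  rw [this]
  exact isOpen_iUnion fun b =>
    (isOpen_Iio.inter (isOpen_Iio.preimage (contF hint)))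

theorem F_le_right (hint : Integrable f) {a b : ℝ} (hab : a < b)
    (hsub : Ioo a b ⊆ D f lam) (hb : b ∉ D f lam) :
    ∀ x ∈ Ioo a b, F f lam x ≤ F f lam b := by
  rintro x ⟨hax, hxb⟩
  by_contra h
  push_neg at h
  set s : Set ℝ := Icc x b ∩ F f lam ⁻¹' Ici (F f lam x) with hs
  have hne : s.Nonempty := ⟨x, ⟨le_rfl, hxb.le⟩, mem_preimage.2 (self_mem_Ici)⟩
  have hcl : IsClosed s := (isClosed_Icc).inter (isClosed_Ici.preimage (contF hint))
  have hbdd : BddAbove s := ⟨b, fun y hy => hy.1.2⟩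
  set c := sSup s with hc
  have hcs : c ∈ s := hcl.csSup_mem hne hbdd
  have hcb : c < b := lt_of_le_of_ne hcs.1.2 (fun hcb => by
    have := hcs.2
    rw [hcb] at this
    exact absurd this (not_le.2 h))
  have hcD : c ∈ D f lam := hsub ⟨lt_of_lt_of_le hax hcs.1.1, hcb⟩
  obtain ⟨y, hcy, hFy⟩ := hcD
  rcases le_or_gt y b with hyb | hby
  · have hys : y ∈ s := ⟨⟨hcs.1.1.trans hcy.le, hyb⟩, le_trans hcs.2 hFy.le⟩
    exact absurd (le_csSup hbdd hys) (not_le.2 hcy)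
  · exact hb ⟨y, hby, lt_of_le_of_lt (h.le.trans hcs.2) hFy⟩

theorem F_endpoints (hint : Integrable f) {a b : ℝ} (hab : a < b)
    (hsub : Ioo a b ⊆ D f lam) (ha : a ∉ D f lam) (hb : b ∉ D f lam) :
    F f lam a = F f lam b := by
  have h1 : F f lam b ≤ F f lam a := by
    by_contra h
    exact ha ⟨b, hab, not_le.1 h⟩
  have h2 : F f lam a ≤ F f lam b := by
    have htend : Tendsto (F f lam) (𝓝[>] a) (𝓝 (F f lam a)) :=
      ((contF hint).tendsto a).mono_left nhdsWithin_le_nhds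
    refine le_of_tendsto htend ?_
    filter_upwards [Ioo_mem_nhdsGT_of_mem (left_mem_Ico.2 hab)] with x hx
    exact F_le_right hint hab hsub hb x hx
  linarith


variable (f lam)

noncomputable def aD (x : ℝ) : ℝ := sSup (Iic x ∩ (D f lam)ᶜ)
noncomputable def bD (x : ℝ) : ℝ := sInf (Ici x ∩ (D f lam)ᶜ)

variable {f lam}

theorem aD_mem (hint : Integrable f) (hlam : 0 < lam) (x : ℝ) :
    aD f lam x ∈ Iic x ∩ (D f lam)ᶜ := by
  have hne : (Iic x ∩ (D f lam)ᶜ).Nonempty := by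
    obtain ⟨m, hm, hmD⟩ := exists_notMem_lt hint hlam x
    exact ⟨m, hm.le, hmD⟩
  exact (isClosed_Iic.inter (isOpen_D hint).isClosed_compl).csSup_mem hne
    ⟨x, fun y hy => hy.1⟩

theorem bD_mem (hint : Integrable f) (hlam : 0 < lam) (x : ℝ) :
    bD f lam x ∈ Ici x ∩ (D f lam)ᶜ := by
  have hne : (Ici x ∩ (D f lam)ᶜ).Nonempty := by
    obtain ⟨m, hm, hmD⟩ := exists_notMem_ge hint hlam x
    exact ⟨m, hm, hmD⟩
  exact (isClosed_Ici.inter (isOpen_D hint).isClosed_compl).csInf_mem hne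
    ⟨x, fun y hy => hy.1⟩

theorem aD_lt (hint : Integrable f) (hlam : 0 < lam) {x : ℝ} (hx : x ∈ D f lam) :
    aD f lam x < x :=
  lt_of_le_of_ne (aD_mem hint hlam x).1 (fun h => (aD_mem hint hlam x).2 (by rw [h]; exact hx))

theorem lt_bD (hint : Integrable f) (hlam : 0 < lam) {x : ℝ} (hx : x ∈ D f lam) :
    x < bD f lam x :=
  lt_of_le_of_ne (bD_mem hint hlam x).1 (fun h => (bD_mem hint hlam x).2 (by rw [← h]; exact hx))

theorem Ioo_subset_D (hint : Integrable f) (hlam : 0 < lam) (x : ℝ) :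
    Ioo (aD f lam x) (bD f lam x) ⊆ D f lam := by
  rintro y ⟨h1, h2⟩
  by_contra hy
  rcases le_total y x with h | h
  · exact absurd (le_csSup ⟨x, fun z hz => hz.1⟩ (⟨h, hy⟩ : y ∈ Iic x ∩ (D f lam)ᶜ))
      (not_le.2 h1)
  · exact absurd (csInf_le ⟨x, fun z hz => hz.1⟩ (⟨h, hy⟩ : y ∈ Ici x ∩ (D f lam)ᶜ))
      (not_le.2 h2)

theorem aD_eq (hint : Integrable f) (hlam : 0 < lam) {x z : ℝ} (hx : x ∈ D f lam)
    (hz : z ∈ Ioo (aD f lam x) (bD f lam x)) : aD f lam z = aD f lam x := by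
  have hne : (Iic z ∩ (D f lam)ᶜ).Nonempty :=
    ⟨aD f lam x, hz.1.le, (aD_mem hint hlam x).2⟩
  refine le_antisymm (csSup_le hne fun y hy => ?_)
    (le_csSup ⟨z, fun w hw => hw.1⟩ ⟨hz.1.le, (aD_mem hint hlam x).2⟩)
  by_contra h
  push_neg at h
  exact hy.2 (Ioo_subset_D hint hlam x ⟨h, lt_of_le_of_lt hy.1 hz.2⟩)

theorem bD_eq (hint : Integrable f) (hlam : 0 < lam) {x z : ℝ} (hx : x ∈ D f lam)
    (hz : z ∈ Ioo (aD f lam x) (bD f lam x)) : bD f lam z = bD f lam x := by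
  have hne : (Ici z ∩ (D f lam)ᶜ).Nonempty :=
    ⟨bD f lam x, hz.2.le, (bD_mem hint hlam x).2⟩
  refine le_antisymm
    (csInf_le ⟨z, fun w hw => hw.1⟩ ⟨hz.2.le, (bD_mem hint hlam x).2⟩)
    (le_csInf hne fun y hy => ?_)
  by_contra h
  push_neg at h
  exact hy.2 (Ioo_subset_D hint hlam x ⟨lt_of_lt_of_le hz.1 hy.1, h⟩)

theorem interval_lint (hf : 0 ≤ f) (hint : Integrable f) (hlam : 0 ≤ lam)
    {a b : ℝ} (hab : a < b) (hF : F f lam a = F f lam b) :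
    ENNReal.ofReal lam * volume (Ioo a b) = ∫⁻ t in Ioo a b, ENNReal.ofReal (f t) := by
  have hI : ∫ t in a..b, f t = lam * (b - a) := by
    have h1 : (∫ t in (0:ℝ)..a, f t) + ∫ t in a..b, f t = ∫ t in (0:ℝ)..b, f t :=
      intervalIntegral.integral_add_adjacent_intervals hint.intervalIntegrable
        hint.intervalIntegrable
    have h2 := hF
    unfold F at h2
    linarith
  have h2 : ∫ t in Ioo a b, f t = lam * (b - a) := by
    rw [← MeasureTheory.integral_Ioc_eq_integral_Ioo,
      ← intervalIntegral.integral_of_le hab.le]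
    exact hI
  calc ENNReal.ofReal lam * volume (Ioo a b) = ENNReal.ofReal (lam * (b - a)) := by
        rw [Real.volume_Ioo, ← ENNReal.ofReal_mul hlam]
    _ = ENNReal.ofReal (∫ t in Ioo a b, f t) := by rw [h2]
    _ = ∫⁻ t in Ioo a b, ENNReal.ofReal (f t) :=
        ofReal_integral_eq_lintegral_ofReal hint.integrableOn (ae_of_all _ hf)

theorem main (hf : 0 ≤ f) (hint : Integrable f) (hlam : 0 < lam) :
    ENNReal.ofReal lam * volume (D f lam) = ∫⁻ t in D f lam, ENNReal.ofReal (f t) := by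
  classical
  set S : Set (Set ℝ) :=
    (fun q : ℚ => Ioo (aD f lam q) (bD f lam q)) '' {q : ℚ | (q : ℝ) ∈ D f lam} with hSdef
  have hSc : S.Countable := (Set.to_countable _).image _
  have hprop : ∀ s ∈ S, ∃ a b : ℝ, a < b ∧ s = Ioo a b ∧ Ioo a b ⊆ D f lam ∧
      a ∉ D f lam ∧ b ∉ D f lam := by
    rintro s ⟨q, hq, rfl⟩
    exact ⟨aD f lam q, bD f lam q, (aD_lt hint hlam hq).trans (lt_bD hint hlam hq), rfl,
      Ioo_subset_D hint hlam q, (aD_mem hint hlam q).2, (bD_mem hint hlam q).2⟩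
  have hcover : D f lam = ⋃₀ S := by
    ext x
    constructor
    · intro hx
      obtain ⟨q, hq1, hq2⟩ :=
        exists_rat_btwn ((aD_lt hint hlam hx).trans (lt_bD hint hlam hx))
      have hxmem : x ∈ Ioo (aD f lam x) (bD f lam x) :=
        ⟨aD_lt hint hlam hx, lt_bD hint hlam hx⟩
      have hqmem : (q : ℝ) ∈ Ioo (aD f lam x) (bD f lam x) := ⟨hq1, hq2⟩
      have hqD : (q : ℝ) ∈ D f lam := Ioo_subset_D hint hlam x hqmem
      have haq := aD_eq hint hlam hx hqmem
      have hbq := bD_eq hint hlam hx hqmem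
      exact ⟨Ioo (aD f lam q) (bD f lam q), ⟨q, hqD, rfl⟩, by rw [haq, hbq]; exact hxmem⟩
    · rintro ⟨s, hsS, hxs⟩
      obtain ⟨a, b, hab, rfl, hsub, -, -⟩ := hprop s hsS
      exact hsub hxs
  have hdisj : S.PairwiseDisjoint id := by
    rintro s ⟨q, hq, rfl⟩ t ⟨r, hr, rfl⟩ hst
    refine Set.disjoint_left.2 fun z hzs hzt => hst ?_
    have h1 : aD f lam z = aD f lam (q : ℝ) := aD_eq hint hlam hq hzs
    have h2 : bD f lam z = bD f lam (q : ℝ) := bD_eq hint hlam hq hzs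
    have h3 : aD f lam z = aD f lam (r : ℝ) := aD_eq hint hlam hr hzt
    have h4 : bD f lam z = bD f lam (r : ℝ) := bD_eq hint hlam hr hzt
    simp only [id]
    rw [← h1, ← h2, h3, h4]
  haveI : Countable ↥S := hSc.to_subtype
  have hms : ∀ s : S, MeasurableSet (s : Set ℝ) := by
    rintro ⟨s, hs⟩
    obtain ⟨a, b, -, rfl, -, -, -⟩ := hprop s hs
    exact measurableSet_Ioo
  have hpd : Pairwise (Function.onFun Disjoint fun s : S => (s : Set ℝ)) :=
    fun s t hst => hdisj s.2 t.2 fun h => hst (Subtype.ext h)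
  have hU : ⋃ s : S, (s : Set ℝ) = D f lam := by
    rw [hcover, sUnion_eq_iUnion]
  rw [← hU, lintegral_iUnion hms hpd, measure_iUnion hpd hms, ← ENNReal.tsum_mul_left]
  refine tsum_congr fun s => ?_
  obtain ⟨a, b, hab, hseq, hsub, ha, hb⟩ := hprop s s.2
  have := interval_lint hf hint hlam.le hab (F_endpoints hint hab hsub ha hb)
  rw [show (s : Set ℝ) = Ioo a b from hseq]
  exact this


theorem lam_lt_iff (hint : Integrable f) {x b : ℝ} (hxb : x < b) :
    lam * (b - x) < ∫ t in x..b, f t ↔ F f lam x < F f lam b := by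
  have h1 : (∫ t in (0:ℝ)..x, f t) + ∫ t in x..b, f t = ∫ t in (0:ℝ)..b, f t :=
    intervalIntegral.integral_add_adjacent_intervals hint.intervalIntegrable
      hint.intervalIntegrable
  unfold F
  constructor <;> intro h <;> nlinarith

theorem mem_D_iff (hint : Integrable f) (hlam : 0 < lam) (x : ℝ) :
    ENNReal.ofReal lam < MR f x ↔ x ∈ D f lam := by
  rw [MR, lt_iSup_iff]
  constructor
  · rintro ⟨b, hb⟩
    rw [lt_iSup_iff] at hb
    obtain ⟨hxb, h⟩ := hb
    rw [ENNReal.ofReal_lt_ofReal_iff_of_nonneg hlam.le] at h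
    have hbx : 0 < b - x := sub_pos.2 hxb
    rw [mul_comm (b - x)⁻¹, ← div_eq_mul_inv, lt_div_iff₀ hbx] at h
    exact ⟨b, hxb, (lam_lt_iff hint hxb).1 h⟩
  · rintro ⟨b, hxb, hF⟩
    have hbx : 0 < b - x := sub_pos.2 hxb
    refine ⟨b, ?_⟩
    rw [lt_iSup_iff]
    refine ⟨hxb, ?_⟩
    rw [ENNReal.ofReal_lt_ofReal_iff_of_nonneg hlam.le, mul_comm (b - x)⁻¹,
      ← div_eq_mul_inv, lt_div_iff₀ hbx]
    exact (lam_lt_iff hint hxb).2 hF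

end SunriseAux


/-- Sunrise lemma, right version: `λ |D_λ| = ∫_{D_λ} f`. -/
theorem sunrise_right (f : ℝ → ℝ) (hf : 0 ≤ f) (hint : Integrable f)
    (lam : ℝ) (hlam : 0 < lam) :
    ENNReal.ofReal lam * volume {x | ENNReal.ofReal lam < MR f x}
      = ∫⁻ t in {x | ENNReal.ofReal lam < MR f x}, ENNReal.ofReal (f t) := by
  have hset : {x | ENNReal.ofReal lam < MR f x} = SunriseAux.D f lam := by
    ext x
    exact SunriseAux.mem_D_iff hint hlam x
  rw [hset]
  exact SunriseAux.main hf hint hlam
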